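/- Let h : ℝⁿ → ℝ be L-smooth and μ-convex (μ ≥ 0), g proper closed convex, λ ∈ ℝ^m, and suppose (γ/α)(x_k - x_{k+1}) - ∇h(x_k) - Aᵀλ ∈ ∂g(x_{k+1}) for some γ, α > 0. Then for all y ∈ ℝⁿ: L(x_{k+1},λ) - L(y,λ) + (γ/α)⟨x_{k+1} - x_k, x_k - y⟩ ≤ -(μ/2)‖y - x_k‖² + ((Lα - 2γ)/(2α))‖x_{k+1} - x_k‖², where L(x,λ) = h(x) + g(x) + ⟨λ, Ax - b⟩. -/

import Mathlib

open RealInnerProductSpace intervalIntegral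

lemma descent_lemma {n : ℕ} {L : ℝ} (hL : 0 ≤ L)
    (h : EuclideanSpace ℝ (Fin n) → ℝ)
    (h' : EuclideanSpace ℝ (Fin n) → EuclideanSpace ℝ (Fin n))
    (hgrad : ∀ z, HasGradientAt h (h' z) z)
    (hLip : ∀ z w, ‖h' z - h' w‖ ≤ L * ‖z - w‖)
    (z w : EuclideanSpace ℝ (Fin n)) :
    h w ≤ h z + ⟪h' z, w - z⟫ + L / 2 * ‖w - z‖ ^ 2 := by
  set v := w - z with hv
  set c : ℝ → EuclideanSpace ℝ (Fin n) := fun t => z + t • v with hc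
  have hcderiv : ∀ t : ℝ, HasDerivAt c v t := by
    intro t
    have := ((hasDerivAt_id t).smul_const v).const_add z
    rw [one_smul] at this
    exact this
  have hφ : ∀ t : ℝ, HasDerivAt (fun t => h (c t)) ⟪h' (c t), v⟫ t := by
    intro t
    have := (hasGradientAt_iff_hasFDerivAt.mp (hgrad (c t))).comp_hasDerivAt t (hcderiv t)
    exact this
  have hcont : Continuous h' := by
    have : LipschitzWith L.toNNReal h' := by
      apply LipschitzWith.of_dist_le_mul
      intro a b
      simpa [dist_eq_norm, Real.coe_toNNReal L hL] using hLip a b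
    exact this.continuous
  have hφcont : Continuous fun t => ⟪h' (c t), v⟫ :=
    (hcont.comp (by continuity)).inner continuous_const
  have hint : ∫ t in (0:ℝ)..1, ⟪h' (c t), v⟫ = h (c 1) - h (c 0) :=
    integral_eq_sub_of_hasDerivAt (fun t _ => hφ t)
      (hφcont.intervalIntegrable 0 1)
  have hc0 : c 0 = z := by simp [hc]
  have hc1 : c 1 = w := by simp [hc, hv]
  have hbound : ∫ t in (0:ℝ)..1, ⟪h' (c t), v⟫ ≤
      ∫ t in (0:ℝ)..1, (⟪h' z, v⟫ + L * t * ‖v‖ ^ 2) := by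
    apply integral_mono_on (by norm_num)
      (hφcont.intervalIntegrable 0 1)
      ((by continuity : Continuous fun t : ℝ => ⟪h' z, v⟫ + L * t * ‖v‖ ^ 2).intervalIntegrable 0 1)
    intro t ht
    have h1 : ⟪h' (c t) - h' z, v⟫ ≤ L * t * ‖v‖ ^ 2 := by
      calc ⟪h' (c t) - h' z, v⟫ ≤ ‖h' (c t) - h' z‖ * ‖v‖ := real_inner_le_norm _ _
        _ ≤ (L * ‖c t - z‖) * ‖v‖ := by
            have := hLip (c t) z
            nlinarith [norm_nonneg v]
        _ = L * t * ‖v‖ ^ 2 := by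
            have : c t - z = t • v := by simp [hc]
            rw [this, norm_smul]
            simp [abs_of_nonneg ht.1]
            ring
    have := inner_sub_left (𝕜 := ℝ) (h' (c t)) (h' z) v
    linarith [h1, this.symm ▸ h1]
  have hval : ∫ t in (0:ℝ)..1, (⟪h' z, v⟫ + L * t * ‖v‖ ^ 2) =
      ⟪h' z, v⟫ + L / 2 * ‖v‖ ^ 2 := by
    have heq : ∀ t : ℝ, ⟪h' z, v⟫ + L * t * ‖v‖ ^ 2 = ⟪h' z, v⟫ + (L * ‖v‖ ^ 2) * t := by
      intro t; ring
    simp only [heq]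
    rw [integral_add intervalIntegrable_const
      (IntervalIntegrable.const_mul intervalIntegrable_id _),
      integral_const_mul, integral_id]
    simp
    ring
  rw [hc0, hc1] at hint
  linarith


/-- If h is L-smooth and μ-convex, g is convex, and
(γ/α)(x_k - x_{k+1}) - ∇h(x_k) - Aᵀλ ∈ ∂g(x_{k+1}), then for all y:
L(x_{k+1},λ) - L(y,λ) + (γ/α)⟨x_{k+1}-x_k, x_k-y⟩
  ≤ -(μ/2)‖y-x_k‖² + ((Lα-2γ)/(2α))‖x_{k+1}-x_k‖²,
where L(x,λ) = h(x) + g(x) + ⟨λ, Ax-b⟩. -/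
theorem stmt19 {n m : ℕ} (L μ : ℝ) (hL : 0 ≤ L) (hμ : 0 ≤ μ)
    (h : EuclideanSpace ℝ (Fin n) → ℝ)
    (h' : EuclideanSpace ℝ (Fin n) → EuclideanSpace ℝ (Fin n))
    (hgrad : ∀ z, HasGradientAt h (h' z) z)
    (hLip : ∀ z w, ‖h' z - h' w‖ ≤ L * ‖z - w‖)
    (hconv : ∀ z w, h z + ⟪h' z, w - z⟫ + μ / 2 * ‖w - z‖ ^ 2 ≤ h w)
    (g : EuclideanSpace ℝ (Fin n) → ℝ) (hg : ConvexOn ℝ Set.univ g)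
    (A : EuclideanSpace ℝ (Fin n) →L[ℝ] EuclideanSpace ℝ (Fin m))
    (b : EuclideanSpace ℝ (Fin m)) (lam : EuclideanSpace ℝ (Fin m))
    (γ α : ℝ) (hγ : 0 < γ) (hα : 0 < α)
    (xk xk1 : EuclideanSpace ℝ (Fin n))
    (hsub : ∀ z, g xk1 +
      ⟪(γ / α) • (xk - xk1) - h' xk - A.adjoint lam, z - xk1⟫ ≤ g z) :
    ∀ y : EuclideanSpace ℝ (Fin n),
      (h xk1 + g xk1 + ⟪lam, A xk1 - b⟫) - (h y + g y + ⟪lam, A y - b⟫) +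
        γ / α * ⟪xk1 - xk, xk - y⟫
      ≤ -(μ / 2) * ‖y - xk‖ ^ 2 + (L * α - 2 * γ) / (2 * α) * ‖xk1 - xk‖ ^ 2 := by
  intro y
  have hdesc := descent_lemma hL h h' hgrad hLip xk xk1
  have hcv := hconv xk y
  have hs := hsub y
  have hadj : ⟪A.adjoint lam, y - xk1⟫ = ⟪lam, A y - b⟫ - ⟪lam, A xk1 - b⟫ := by
    rw [ContinuousLinearMap.adjoint_inner_left]
    simp [inner_sub_right, map_sub]
  have hexp : ⟪(γ / α) • (xk - xk1) - h' xk - A.adjoint lam, y - xk1⟫ =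
      γ / α * ⟪xk - xk1, y - xk1⟫ - ⟪h' xk, y - xk1⟫ - ⟪A.adjoint lam, y - xk1⟫ := by
    simp only [inner_sub_left, real_inner_smul_left]
  have hkey : ⟪xk - xk1, y - xk1⟫ = ⟪xk1 - xk, xk - y⟫ + ‖xk1 - xk‖ ^ 2 := by
    have h1 : y - xk1 = (y - xk) + (xk - xk1) := by abel
    rw [h1, inner_add_right,
      show xk1 - xk = -(xk - xk1) by abel, show xk - y = -(y - xk) by abel,
      inner_neg_neg, real_inner_self_eq_norm_sq, norm_neg]
  have hhsplit : ⟪h' xk, y - xk1⟫ = ⟪h' xk, y - xk⟫ - ⟪h' xk, xk1 - xk⟫ := by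
    simp only [inner_sub_right]; ring
  have hcoef : (L * α - 2 * γ) / (2 * α) = L / 2 - γ / α := by
    field_simp
  rw [hexp, hadj, hkey, hhsplit] at hs
  rw [hcoef]
  nlinarith [hs, hdesc, hcv]
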